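/- arXiv:2110.09671 — 3 statements merged into one kernel-verified Lean document; each statement's English description precedes it below -/
import Mathlib

section
/- Let K be an n×n complex Hermitian positive definite matrix, h ∈ ℂⁿ with h ≠ 0, and let α ∈ (0,1], γ > 0, λ > 0 be reals. Define Z = α·K − α²λ·h hᴴ and suppose Z is positive definite. Then α²λ·(hᴴ Z⁻¹ h) = γ if and only if λ = 1 / (α(1 + 1/γ)·(hᴴ K⁻¹ h)). (Both hᴴ Z⁻¹ h and hᴴ K⁻¹ h are positive real numbers.) -/
open Matrix BigOperators
open scoped ComplexOrder

lemma vecMulVec_mulVec' {n : ℕ} (h w u : Fin n → ℂ) :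
    (vecMulVec h w).mulVec u = (w ⬝ᵥ u) • h := by
  funext i
  simp [vecMulVec, mulVec, dotProduct, Finset.mul_sum, Finset.sum_mul, mul_assoc,
    mul_comm, mul_left_comm]

/-- For Hermitian positive definite `K`, `h ≠ 0`, `α ∈ (0,1]`, `γ > 0`,
`λ > 0`, and `Z = α·K − α²λ·h hᴴ` positive definite, the MMSE-combined uplink SINR
meets the target with equality, `α²λ·(hᴴ Z⁻¹ h) = γ`, iff
`λ = 1 / (α(1 + 1/γ)·(hᴴ K⁻¹ h))`. -/
theorem stmt4 {n : ℕ} (K : Matrix (Fin n) (Fin n) ℂ) (hK : K.PosDef)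
    (h : Fin n → ℂ) (hh : h ≠ 0) (α γ lam : ℝ)
    (hα : 0 < α ∧ α ≤ 1) (hγ : 0 < γ) (hlam : 0 < lam)
    (Z : Matrix (Fin n) (Fin n) ℂ)
    (hZdef : Z = (α : ℂ) • K - ((α : ℂ) ^ 2 * (lam : ℂ)) • vecMulVec h (star h))
    (hZ : Z.PosDef) :
    α ^ 2 * lam * (star h ⬝ᵥ Z⁻¹.mulVec h).re = γ ↔
      lam = 1 / (α * (1 + 1 / γ) * (star h ⬝ᵥ K⁻¹.mulVec h).re) := by
  obtain ⟨hα0, hα1⟩ := hα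
  set u : Fin n → ℂ := Z⁻¹.mulVec h with hu_def
  set s : ℂ := star h ⬝ᵥ u with hs_def
  set t : ℂ := star h ⬝ᵥ K⁻¹.mulVec h with ht_def
  have hspos : 0 < s := hZ.inv.dotProduct_mulVec_pos hh
  have htpos : 0 < t := hK.inv.dotProduct_mulVec_pos hh
  have hsim : s.im = 0 := by simpa using (Complex.lt_def.1 hspos).2.symm
  have htim : t.im = 0 := by simpa using (Complex.lt_def.1 htpos).2.symm
  have hsre : 0 < s.re := by simpa using (Complex.lt_def.1 hspos).1
  have htre : 0 < t.re := by simpa using (Complex.lt_def.1 htpos).1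
  -- Z u = h
  have hZu : Z.mulVec u = h := by
    rw [hu_def, mulVec_mulVec, Matrix.mul_nonsing_inv _ ((Matrix.isUnit_iff_isUnit_det Z).1 hZ.isUnit),
      one_mulVec]
  set c : ℂ := (α : ℂ) ^ 2 * (lam : ℂ) with hc_def
  have hKu : (α : ℂ) • K.mulVec u = (1 + c * s) • h := by
    have := hZu
    rw [hZdef, Matrix.sub_mulVec, Matrix.smul_mulVec, Matrix.smul_mulVec,
      vecMulVec_mulVec', ← hs_def, smul_smul] at this
    have := sub_eq_iff_eq_add.1 this
    rw [this]
    module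
  -- apply K⁻¹
  have hu2 : (α : ℂ) • u = (1 + c * s) • (K⁻¹.mulVec h) := by
    have h1 : K⁻¹.mulVec ((α : ℂ) • K.mulVec u) = K⁻¹.mulVec ((1 + c * s) • h) := by
      rw [hKu]
    rwa [Matrix.mulVec_smul, Matrix.mulVec_smul, mulVec_mulVec,
      Matrix.nonsing_inv_mul _ ((Matrix.isUnit_iff_isUnit_det K).1 hK.isUnit),
      one_mulVec] at h1
  -- dot with star h
  have hkey : (α : ℂ) * s = (1 + c * s) * t := by
    have h1 : star h ⬝ᵥ ((α : ℂ) • u) = star h ⬝ᵥ ((1 + c * s) • (K⁻¹.mulVec h)) := by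
      rw [hu2]
    simpa [dotProduct_smul, smul_eq_mul, ← hs_def, ← ht_def] using h1
  -- real version
  set S := s.re with hS
  set T := t.re with hT
  have hkeyR : α * S = (1 + α ^ 2 * lam * S) * T := by
    have hs' : s = (S : ℂ) := Complex.ext rfl (by simp [hsim, hS])
    have ht' : t = (T : ℂ) := Complex.ext rfl (by simp [htim, hT])
    rw [hs', ht', hc_def] at hkey
    exact_mod_cast hkey
  have hT0 : T ≠ 0 := ne_of_gt htre
  have hS0 : S ≠ 0 := ne_of_gt hsre
  have hγ0 : γ ≠ 0 := ne_of_gt hγ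
  have hα0' : α ≠ 0 := ne_of_gt hα0
  constructor
  · intro hE
    have : α * S = (1 + γ) * T := by rw [← hE]; exact hkeyR
    have h3 : lam * α * (α * S) = lam * α * ((1 + γ) * T) := by rw [this]
    have h4 : lam * α * (α * S) = γ := by rw [← hE]; ring
    field_simp
    nlinarith [h3, h4]
  · intro hE
    have hden : α * (1 + 1 / γ) * T ≠ 0 := by positivity
    rw [hE] at hkeyR ⊢
    field_simp at hkeyR ⊢
    nlinarith [hkeyR]
end

section
/- Let h_{j,i,u} ∈ ℂ^{N_b}, w_{i,u} ∈ ℂ^{N_b}, real multipliers λ_{i,u} and μ_{i,m}, set D_i = diag(μ_{i,1},…,μ_{i,N_b}), let α, β be reals with α = 1 − β, let p₀, σ², γ_{i,u} > 0 be reals, and let Q_{i,u} = αβ ∑_j h_{j,i,u}ᴴ diag(∑_v w_{j,v} w_{j,v}ᴴ) h_{j,i,u}. Then the Lagrangian L = N_c N_b p₀ − ∑_{i,u} λ_{i,u}( (α²/γ_{i,u})|w_{i,u}ᴴ h_{i,i,u}|² − α² ∑_{(j,v)≠(i,u)} |h_{j,i,u}ᴴ w_{j,v}|² − Q_{i,u}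 − σ² ) + ∑_{i,m} μ_{i,m}( α[W_i W_iᴴ]_{m,m} − p₀ ) equals ∑_{i,u} λ_{i,u} σ² − p₀ ∑_i ( tr(D_i) − N_b ) + ∑_{i,u} w_{i,u}ᴴ ( α D_i − α²(1 + 1/γ_{i,u}) λ_{i,u} h_{i,i,u} h_{i,i,u}ᴴ + α² ∑_{j,v} λ_{j,v} h_{i,j,v} h_{i,j,v}ᴴ + αβ·diag(∑_{j,v} λ_{j,v} h_{i,j,v} h_{i,j,v}ᴴ) ) w_{i,u}. -/
open Matrix BigOperators

private lemma sq_norm_dot (z : ℂ) : ((‖z‖ ^ 2 : ℝ) : ℂ) = z * star z := by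
  rw [show (star z) = (starRingEnd ℂ) z from rfl, Complex.mul_conj, Complex.normSq_eq_norm_sq]

private lemma star_dot {Nb : ℕ} (a b : Fin Nb → ℂ) : star (star a ⬝ᵥ b) = star b ⬝ᵥ a := by
  simp [dotProduct, star_sum]
  exact Finset.sum_congr rfl fun m _ => by ring

private lemma quad_vvv {Nb : ℕ} (a b c d : Fin Nb → ℂ) :
    star a ⬝ᵥ (vecMulVec b (star c)).mulVec d = (star a ⬝ᵥ b) * (star c ⬝ᵥ d) := by
  simp only [vecMulVec, mulVec, dotProduct, of_apply, Pi.star_apply, Finset.sum_mul,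
    Finset.mul_sum]
  rw [Finset.sum_comm]
  exact Finset.sum_congr rfl fun m _ => Finset.sum_congr rfl fun n _ => by ring

private lemma quad_diag {Nb : ℕ} (dv a b : Fin Nb → ℂ) :
    star a ⬝ᵥ (diagonal dv).mulVec b = ∑ m, dv m * (star (a m) * b m) := by
  simp [dotProduct, mulVec_diagonal]
  exact Finset.sum_congr rfl fun m _ => by ring

private lemma dot_sumv {Nb : ℕ} {ι : Type*} (s : Finset ι) (a : Fin Nb → ℂ)
    (f : ι → Fin Nb → ℂ) : a ⬝ᵥ (∑ p ∈ s, f p) = ∑ p ∈ s, a ⬝ᵥ f p := by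
  simp only [dotProduct, Finset.sum_apply, Finset.mul_sum]
  exact Finset.sum_comm

private lemma sumM_mulVec {Nb : ℕ} {ι : Type*} (s : Finset ι)
    (A : ι → Matrix (Fin Nb) (Fin Nb) ℂ) (x : Fin Nb → ℂ) :
    (∑ p ∈ s, A p).mulVec x = ∑ p ∈ s, (A p).mulVec x := by
  funext m
  simp only [mulVec, dotProduct, Matrix.sum_apply, Finset.sum_apply, Finset.sum_mul]
  exact Finset.sum_comm

/-- The Lagrangian reformulation (equations (20) and (24)) in the
proof of Theorem 1. With multipliers `λ_{i,u}`, `μ_{i,m}`, `D_i = diag(μ_{i,·})`,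
`α = 1 − β`, quantization noise `Q_{i,u}`, the Lagrangian
`L = N_c N_b p₀ − ∑_{i,u} λ_{i,u}((α²/γ_{i,u})|w_{i,u}ᴴ h_{i,i,u}|²
− α² ∑_{(j,v)≠(i,u)} |h_{j,i,u}ᴴ w_{j,v}|² − Q_{i,u} − σ²)
+ ∑_{i,m} μ_{i,m}(α[W_i W_iᴴ]_{m,m} − p₀)`
equals
`∑_{i,u} λ_{i,u} σ² − p₀ ∑_i (tr(D_i) − N_b)
+ ∑_{i,u} w_{i,u}ᴴ (α D_i − α²(1+1/γ_{i,u}) λ_{i,u} h_{i,i,u} h_{i,i,u}ᴴ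
+ α² ∑_{j,v} λ_{j,v} h_{i,j,v} h_{i,j,v}ᴴ
+ αβ·diag(∑_{j,v} λ_{j,v} h_{i,j,v} h_{i,j,v}ᴴ)) w_{i,u}`.
Here `h j i u` denotes the channel `h_{j,i,u}` from BS `j` to user `u` in cell `i`. -/
theorem stmt11 {Nb Nc Nu : ℕ}
    (h : Fin Nc → Fin Nc → Fin Nu → (Fin Nb → ℂ))
    (w : Fin Nc → Fin Nu → (Fin Nb → ℂ))
    (lam : Fin Nc → Fin Nu → ℝ) (μ : Fin Nc → Fin Nb → ℝ)
    (α β : ℝ) (hαβ : α = 1 - β)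
    (p₀ σsq : ℝ) (γ : Fin Nc → Fin Nu → ℝ)
    (hp₀ : 0 < p₀) (hσ : 0 < σsq) (hγ : ∀ i u, 0 < γ i u)
    (Q : Fin Nc → Fin Nu → ℂ)
    (hQ : ∀ i u, Q i u = ((α * β : ℝ) : ℂ) *
      ∑ j : Fin Nc, star (h j i u) ⬝ᵥ
        (diagonal (diag (∑ v : Fin Nu, vecMulVec (w j v) (star (w j v))))).mulVec (h j i u))
    (L : ℂ)
    (hL : L = ((Nc * Nb : ℕ) : ℂ) * (p₀ : ℂ)
      - ∑ i : Fin Nc, ∑ u : Fin Nu, (lam i u : ℂ) *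
          (((α : ℂ) ^ 2 / (γ i u : ℂ)) * ((‖star (w i u) ⬝ᵥ h i i u‖ ^ 2 : ℝ) : ℂ)
            - (α : ℂ) ^ 2 * ∑ p ∈ Finset.univ.erase (i, u),
                ((‖star (h p.1 i u) ⬝ᵥ w p.1 p.2‖ ^ 2 : ℝ) : ℂ)
            - Q i u - (σsq : ℂ))
      + ∑ i : Fin Nc, ∑ m : Fin Nb, (μ i m : ℂ) *
          ((α : ℂ) * (∑ u : Fin Nu, vecMulVec (w i u) (star (w i u))) m m - (p₀ : ℂ))) :
    L = ∑ i : Fin Nc, ∑ u : Fin Nu, (lam i u : ℂ) * (σsq : ℂ)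
      - (p₀ : ℂ) * ∑ i : Fin Nc,
          (trace (diagonal (fun m => (μ i m : ℂ))) - (Nb : ℂ))
      + ∑ i : Fin Nc, ∑ u : Fin Nu, star (w i u) ⬝ᵥ
          (((α : ℂ) • diagonal (fun m => (μ i m : ℂ))
            - ((α : ℂ) ^ 2 * (1 + 1 / (γ i u : ℂ)) * (lam i u : ℂ)) •
                vecMulVec (h i i u) (star (h i i u))
            + ((α : ℂ) ^ 2) • ∑ p : Fin Nc × Fin Nu,
                (lam p.1 p.2 : ℂ) • vecMulVec (h i p.1 p.2) (star (h i p.1 p.2))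
            + ((α * β : ℝ) : ℂ) • diagonal (diag (∑ p : Fin Nc × Fin Nu,
                (lam p.1 p.2 : ℂ) • vecMulVec (h i p.1 p.2) (star (h i p.1 p.2))))).mulVec
            (w i u)) := by
  subst hL
  -- canonical atoms
  -- key expansion of the RHS quadratic form
  have key : ∀ i u, star (w i u) ⬝ᵥ
      (((α : ℂ) • diagonal (fun m => (μ i m : ℂ))
        - ((α : ℂ) ^ 2 * (1 + 1 / (γ i u : ℂ)) * (lam i u : ℂ)) •
            vecMulVec (h i i u) (star (h i i u))
        + ((α : ℂ) ^ 2) • ∑ p : Fin Nc × Fin Nu,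
            (lam p.1 p.2 : ℂ) • vecMulVec (h i p.1 p.2) (star (h i p.1 p.2))
        + ((α * β : ℝ) : ℂ) • diagonal (diag (∑ p : Fin Nc × Fin Nu,
            (lam p.1 p.2 : ℂ) • vecMulVec (h i p.1 p.2) (star (h i p.1 p.2))))).mulVec
        (w i u))
      = (α : ℂ) * ∑ m, (μ i m : ℂ) * (star (w i u m) * w i u m)
        - ((α : ℂ) ^ 2 * (1 + 1 / (γ i u : ℂ)) * (lam i u : ℂ)) *
            ((star (w i u) ⬝ᵥ h i i u) * (star (h i i u) ⬝ᵥ w i u))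
        + (α : ℂ) ^ 2 * ∑ p : Fin Nc × Fin Nu, (lam p.1 p.2 : ℂ) *
            ((star (w i u) ⬝ᵥ h i p.1 p.2) * (star (h i p.1 p.2) ⬝ᵥ w i u))
        + ((α * β : ℝ) : ℂ) * ∑ p : Fin Nc × Fin Nu, (lam p.1 p.2 : ℂ) *
            ∑ m, (h i p.1 p.2 m * star (h i p.1 p.2 m)) * (star (w i u m) * w i u m) := by
    intro i u
    rw [add_mulVec, add_mulVec, sub_mulVec, dotProduct_add, dotProduct_add, dotProduct_sub]
    congr 2
    congr 1
    · -- α • diagonal μ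
      rw [smul_mulVec, dotProduct_smul, smul_eq_mul, quad_diag]
    · -- the signal rank-one term
      rw [smul_mulVec, dotProduct_smul, smul_eq_mul, quad_vvv]
    · -- α² • ∑ λ vecMulVec
      rw [smul_mulVec, dotProduct_smul, smul_eq_mul, sumM_mulVec, dot_sumv]
      congr 1
      apply Finset.sum_congr rfl
      intro p _
      rw [smul_mulVec, dotProduct_smul, smul_eq_mul, quad_vvv]
    · -- αβ • diagonal (diag ∑ ...)
      rw [smul_mulVec, dotProduct_smul, smul_eq_mul, quad_diag]
      congr 1
      have : ∀ m, diag (∑ p : Fin Nc × Fin Nu,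
          (lam p.1 p.2 : ℂ) • vecMulVec (h i p.1 p.2) (star (h i p.1 p.2))) m
          = ∑ p : Fin Nc × Fin Nu, (lam p.1 p.2 : ℂ) *
              (h i p.1 p.2 m * star (h i p.1 p.2 m)) := by
        intro m
        simp [diag, Matrix.sum_apply, vecMulVec, Pi.smul_apply, smul_eq_mul]
      calc ∑ m, diag (∑ p : Fin Nc × Fin Nu,
              (lam p.1 p.2 : ℂ) • vecMulVec (h i p.1 p.2) (star (h i p.1 p.2))) m *
              (star (w i u m) * w i u m)
          = ∑ m, ∑ p : Fin Nc × Fin Nu, (lam p.1 p.2 : ℂ) *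
              ((h i p.1 p.2 m * star (h i p.1 p.2 m)) * (star (w i u m) * w i u m)) := by
            apply Finset.sum_congr rfl; intro m _
            rw [this m, Finset.sum_mul]
            apply Finset.sum_congr rfl; intro p _; ring
        _ = ∑ p : Fin Nc × Fin Nu, (lam p.1 p.2 : ℂ) *
              ∑ m, (h i p.1 p.2 m * star (h i p.1 p.2 m)) * (star (w i u m) * w i u m) := by
            rw [Finset.sum_comm]
            exact Finset.sum_congr rfl fun p _ => (Finset.mul_sum _ _ _).symm
  -- merge double sums into product sums
  have merge : ∀ (F : Fin Nc → Fin Nu → ℂ),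
      ∑ q : Fin Nc × Fin Nu, F q.1 q.2 = ∑ i, ∑ u, F i u :=
    fun F => Fintype.sum_prod_type _
  trans ((∑ i : Fin Nc, ∑ u : Fin Nu, (lam i u : ℂ) * (σsq : ℂ))
      + (((Nc * Nb : ℕ) : ℂ) * (p₀ : ℂ) - (p₀ : ℂ) * ∑ i : Fin Nc, ∑ m : Fin Nb, (μ i m : ℂ))
      + ∑ i : Fin Nc, ∑ u : Fin Nu,
          ((α : ℂ) * ∑ m, (μ i m : ℂ) * (star (w i u m) * w i u m)
            - ((α : ℂ) ^ 2 * (1 + 1 / (γ i u : ℂ)) * (lam i u : ℂ)) *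
                ((star (w i u) ⬝ᵥ h i i u) * (star (h i i u) ⬝ᵥ w i u))
            + (α : ℂ) ^ 2 * ∑ p : Fin Nc × Fin Nu, (lam p.1 p.2 : ℂ) *
                ((star (w i u) ⬝ᵥ h i p.1 p.2) * (star (h i p.1 p.2) ⬝ᵥ w i u))
            + ((α * β : ℝ) : ℂ) * ∑ p : Fin Nc × Fin Nu, (lam p.1 p.2 : ℂ) *
                ∑ m, (h i p.1 p.2 m * star (h i p.1 p.2 m)) * (star (w i u m) * w i u m)))
  · -- LHS = E
    -- expand the constraint bracket per (i,u)
    have hSterm : ∀ i u, (lam i u : ℂ) *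
        (((α : ℂ) ^ 2 / (γ i u : ℂ)) * ((‖star (w i u) ⬝ᵥ h i i u‖ ^ 2 : ℝ) : ℂ)
          - (α : ℂ) ^ 2 * ∑ p ∈ Finset.univ.erase (i, u),
              ((‖star (h p.1 i u) ⬝ᵥ w p.1 p.2‖ ^ 2 : ℝ) : ℂ)
          - Q i u - (σsq : ℂ))
        = ((α : ℂ) ^ 2 * (1 + 1 / (γ i u : ℂ)) * (lam i u : ℂ)) *
            ((star (w i u) ⬝ᵥ h i i u) * (star (h i i u) ⬝ᵥ w i u))
          - (α : ℂ) ^ 2 * ((lam i u : ℂ) * ∑ p : Fin Nc × Fin Nu,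
              (star (h p.1 i u) ⬝ᵥ w p.1 p.2) * (star (w p.1 p.2) ⬝ᵥ h p.1 i u))
          - ((α * β : ℝ) : ℂ) * ((lam i u : ℂ) * ∑ j : Fin Nc, ∑ m,
              (∑ v : Fin Nu, w j v m * star (w j v m)) * (star (h j i u m) * h j i u m))
          - (lam i u : ℂ) * (σsq : ℂ) := by
      intro i u
      rw [hQ i u, Finset.sum_erase_eq_sub (Finset.mem_univ (i, u))]
      have hns : ∑ p : Fin Nc × Fin Nu, ((‖star (h p.1 i u) ⬝ᵥ w p.1 p.2‖ ^ 2 : ℝ) : ℂ)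
          = ∑ p : Fin Nc × Fin Nu,
              (star (h p.1 i u) ⬝ᵥ w p.1 p.2) * (star (w p.1 p.2) ⬝ᵥ h p.1 i u) :=
        Finset.sum_congr rfl fun p _ => by rw [sq_norm_dot, star_dot]
      have hq2 : ∑ j : Fin Nc, star (h j i u) ⬝ᵥ
            (diagonal (diag (∑ v : Fin Nu, vecMulVec (w j v) (star (w j v))))).mulVec (h j i u)
          = ∑ j : Fin Nc, ∑ m,
              (∑ v : Fin Nu, w j v m * star (w j v m)) * (star (h j i u m) * h j i u m) := by
        refine Finset.sum_congr rfl fun j _ => ?_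
        rw [quad_diag]
        refine Finset.sum_congr rfl fun m _ => ?_
        have : diag (∑ v : Fin Nu, vecMulVec (w j v) (star (w j v))) m
            = ∑ v : Fin Nu, w j v m * star (w j v m) := by
          simp [diag, Matrix.sum_apply, vecMulVec]
        rw [this]
      rw [hns, hq2, sq_norm_dot ((star (w i u) ⬝ᵥ h i i u)),
        sq_norm_dot ((star (h i i u) ⬝ᵥ w i u)), star_dot, star_dot]
      ring
    have hS : ∑ i : Fin Nc, ∑ u : Fin Nu, (lam i u : ℂ) *
        (((α : ℂ) ^ 2 / (γ i u : ℂ)) * ((‖star (w i u) ⬝ᵥ h i i u‖ ^ 2 : ℝ) : ℂ)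
          - (α : ℂ) ^ 2 * ∑ p ∈ Finset.univ.erase (i, u),
              ((‖star (h p.1 i u) ⬝ᵥ w p.1 p.2‖ ^ 2 : ℝ) : ℂ)
          - Q i u - (σsq : ℂ))
        = (∑ i : Fin Nc, ∑ u : Fin Nu, ((α : ℂ) ^ 2 * (1 + 1 / (γ i u : ℂ)) * (lam i u : ℂ)) *
            ((star (w i u) ⬝ᵥ h i i u) * (star (h i i u) ⬝ᵥ w i u)))
          - (α : ℂ) ^ 2 * ∑ i : Fin Nc, ∑ u : Fin Nu, ((lam i u : ℂ) * ∑ p : Fin Nc × Fin Nu,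
              (star (h p.1 i u) ⬝ᵥ w p.1 p.2) * (star (w p.1 p.2) ⬝ᵥ h p.1 i u))
          - ((α * β : ℝ) : ℂ) * ∑ i : Fin Nc, ∑ u : Fin Nu, ((lam i u : ℂ) * ∑ j : Fin Nc, ∑ m,
              (∑ v : Fin Nu, w j v m * star (w j v m)) * (star (h j i u m) * h j i u m))
          - ∑ i : Fin Nc, ∑ u : Fin Nu, (lam i u : ℂ) * (σsq : ℂ) := by
      rw [Finset.sum_congr rfl fun i _ => Finset.sum_congr rfl fun u _ => hSterm i u]
      simp only [Finset.sum_sub_distrib, Finset.mul_sum]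
    -- the interference swap
    have hswap2 : ∑ i : Fin Nc, ∑ u : Fin Nu, ((lam i u : ℂ) * ∑ p : Fin Nc × Fin Nu,
          (star (h p.1 i u) ⬝ᵥ w p.1 p.2) * (star (w p.1 p.2) ⬝ᵥ h p.1 i u))
        = ∑ i : Fin Nc, ∑ u : Fin Nu, ∑ p : Fin Nc × Fin Nu, (lam p.1 p.2 : ℂ) *
            ((star (w i u) ⬝ᵥ h i p.1 p.2) * (star (h i p.1 p.2) ⬝ᵥ w i u)) := by
      rw [← merge (fun i u => (lam i u : ℂ) * ∑ p : Fin Nc × Fin Nu,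
          (star (h p.1 i u) ⬝ᵥ w p.1 p.2) * (star (w p.1 p.2) ⬝ᵥ h p.1 i u)),
        ← merge (fun i u => ∑ p : Fin Nc × Fin Nu, (lam p.1 p.2 : ℂ) *
            ((star (w i u) ⬝ᵥ h i p.1 p.2) * (star (h i p.1 p.2) ⬝ᵥ w i u)))]
      calc ∑ q : Fin Nc × Fin Nu, (lam q.1 q.2 : ℂ) * ∑ p : Fin Nc × Fin Nu,
              (star (h p.1 q.1 q.2) ⬝ᵥ w p.1 p.2) * (star (w p.1 p.2) ⬝ᵥ h p.1 q.1 q.2)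
          = ∑ q : Fin Nc × Fin Nu, ∑ p : Fin Nc × Fin Nu, (lam q.1 q.2 : ℂ) *
              ((star (h p.1 q.1 q.2) ⬝ᵥ w p.1 p.2) * (star (w p.1 p.2) ⬝ᵥ h p.1 q.1 q.2)) :=
            Finset.sum_congr rfl fun q _ => Finset.mul_sum _ _ _
        _ = ∑ p : Fin Nc × Fin Nu, ∑ q : Fin Nc × Fin Nu, (lam q.1 q.2 : ℂ) *
              ((star (h p.1 q.1 q.2) ⬝ᵥ w p.1 p.2) * (star (w p.1 p.2) ⬝ᵥ h p.1 q.1 q.2)) :=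
            Finset.sum_comm
        _ = ∑ r : Fin Nc × Fin Nu, ∑ p : Fin Nc × Fin Nu, (lam p.1 p.2 : ℂ) *
              ((star (w r.1 r.2) ⬝ᵥ h r.1 p.1 p.2) * (star (h r.1 p.1 p.2) ⬝ᵥ w r.1 r.2)) :=
            Finset.sum_congr rfl fun r _ => Finset.sum_congr rfl fun q _ => by ring
    -- the quantization swap
    have hswap3 : ∑ i : Fin Nc, ∑ u : Fin Nu, ((lam i u : ℂ) * ∑ j : Fin Nc, ∑ m,
          (∑ v : Fin Nu, w j v m * star (w j v m)) * (star (h j i u m) * h j i u m))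
        = ∑ i : Fin Nc, ∑ u : Fin Nu, ∑ p : Fin Nc × Fin Nu, (lam p.1 p.2 : ℂ) *
            ∑ m, (h i p.1 p.2 m * star (h i p.1 p.2 m)) * (star (w i u m) * w i u m) := by
      have inner : ∀ i u, (lam i u : ℂ) * ∑ j : Fin Nc, ∑ m,
            (∑ v : Fin Nu, w j v m * star (w j v m)) * (star (h j i u m) * h j i u m)
          = ∑ p : Fin Nc × Fin Nu, (lam i u : ℂ) *
              ∑ m, (h p.1 i u m * star (h p.1 i u m)) * (star (w p.1 p.2 m) * w p.1 p.2 m) := by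
        intro i u
        rw [Fintype.sum_prod_type, Finset.mul_sum]
        refine Finset.sum_congr rfl fun j _ => ?_
        rw [← Finset.mul_sum]
        congr 1
        calc ∑ m, (∑ v : Fin Nu, w j v m * star (w j v m)) * (star (h j i u m) * h j i u m)
            = ∑ m, ∑ v : Fin Nu,
                (h j i u m * star (h j i u m)) * (star (w j v m) * w j v m) := by
              refine Finset.sum_congr rfl fun m _ => ?_
              rw [Finset.sum_mul]
              exact Finset.sum_congr rfl fun v _ => by ring
          _ = ∑ v : Fin Nu, ∑ m,
                (h j i u m * star (h j i u m)) * (star (w j v m) * w j v m) :=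
              Finset.sum_comm
      rw [Finset.sum_congr rfl fun i _ => Finset.sum_congr rfl fun u _ => inner i u]
      rw [← merge (fun i u => ∑ p : Fin Nc × Fin Nu, (lam i u : ℂ) *
          ∑ m, (h p.1 i u m * star (h p.1 i u m)) * (star (w p.1 p.2 m) * w p.1 p.2 m)),
        ← merge (fun i u => ∑ p : Fin Nc × Fin Nu, (lam p.1 p.2 : ℂ) *
          ∑ m, (h i p.1 p.2 m * star (h i p.1 p.2 m)) * (star (w i u m) * w i u m))]
      exact Finset.sum_comm
    -- the power-constraint part
    have hP : ∑ i : Fin Nc, ∑ m : Fin Nb, (μ i m : ℂ) *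
          ((α : ℂ) * (∑ u : Fin Nu, vecMulVec (w i u) (star (w i u))) m m - (p₀ : ℂ))
        = (∑ i : Fin Nc, ∑ u : Fin Nu,
            (α : ℂ) * ∑ m, (μ i m : ℂ) * (star (w i u m) * w i u m))
          - (p₀ : ℂ) * ∑ i : Fin Nc, ∑ m : Fin Nb, (μ i m : ℂ) := by
      have hper : ∀ i, ∑ m : Fin Nb, (μ i m : ℂ) *
            ((α : ℂ) * (∑ u : Fin Nu, vecMulVec (w i u) (star (w i u))) m m - (p₀ : ℂ))
          = (∑ u : Fin Nu, (α : ℂ) * ∑ m, (μ i m : ℂ) * (star (w i u m) * w i u m))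
            - (p₀ : ℂ) * ∑ m : Fin Nb, (μ i m : ℂ) := by
        intro i
        have hent : ∀ m, (∑ u : Fin Nu, vecMulVec (w i u) (star (w i u))) m m
            = ∑ u : Fin Nu, w i u m * star (w i u m) := by
          intro m; simp [Matrix.sum_apply, vecMulVec]
        calc ∑ m : Fin Nb, (μ i m : ℂ) *
              ((α : ℂ) * (∑ u : Fin Nu, vecMulVec (w i u) (star (w i u))) m m - (p₀ : ℂ))
            = ∑ m : Fin Nb, ((∑ u : Fin Nu,
                (α : ℂ) * ((μ i m : ℂ) * (star (w i u m) * w i u m)))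
                - (p₀ : ℂ) * (μ i m : ℂ)) := by
              refine Finset.sum_congr rfl fun m _ => ?_
              rw [hent m, Finset.mul_sum]
              rw [mul_sub, Finset.mul_sum]
              congr 1
              · exact Finset.sum_congr rfl fun u _ => by ring
              · ring
          _ = (∑ u : Fin Nu, (α : ℂ) * ∑ m, (μ i m : ℂ) * (star (w i u m) * w i u m))
              - (p₀ : ℂ) * ∑ m : Fin Nb, (μ i m : ℂ) := by
              rw [Finset.sum_sub_distrib, Finset.sum_comm, ← Finset.mul_sum]
              congr 1
              exact Finset.sum_congr rfl fun u _ => (Finset.mul_sum _ _ _).symm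
      rw [Finset.sum_congr rfl fun i _ => hper i, Finset.sum_sub_distrib, ← Finset.mul_sum]
    rw [hS, hP]
    simp only [Finset.sum_add_distrib, Finset.sum_sub_distrib, ← Finset.mul_sum]
    rw [hswap2, hswap3]
    ring
  · -- E = RHS
    symm
    simp only [key, trace_diagonal]
    have hc : ∑ i : Fin Nc, ((∑ m, (μ i m : ℂ)) - (Nb : ℂ))
        = (∑ i : Fin Nc, ∑ m : Fin Nb, (μ i m : ℂ)) - ((Nc : ℕ) : ℂ) * (Nb : ℂ) := by
      rw [Finset.sum_sub_distrib, Finset.sum_const, Finset.card_univ, Fintype.card_fin,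
        nsmul_eq_mul]
    rw [hc]
    push_cast
    ring
end

section
/- (Weak duality for the per-antenna power minimax problem.) Let h_{j,i,u} ∈ ℂ^{N_b}, w_{j,v} ∈ ℂ^{N_b}, reals β ∈ [0,1), α = 1 − β, σ² > 0, targets γ_{i,u} > 0, and p₀ a real. Suppose the primal point (W, p₀) is feasible: Γ_{i,u}(W) ≥ γ_{i,u} for all i,u, and α[W_i W_iᴴ]_{m,m} ≤ p₀ for all i,m. Suppose the dual variables are feasible: λ_{i,u} ≥ 0, D_i = diag(μ_{i,1},…,μ_{i,N_b}) with μ_{i,m} ≥ 0, tr(D_i) ≤ N_b for all i, and for all i,u the Hermitian matrix α D_i − α²(1 + 1/γ_{i,u}) λ_{i,u} h_{i,i,u} h_{i,i,u}ᴴ + α² ∑_{j,v} λ_{j,v} h_{i,j,v} h_{i,j,v}ᴴ + αβ·diag(∑_{j,v} λ_{j,v} h_{i,j,v} h_{i,j,v}ᴴ) is positive semidefinite. Then ∑_{i,u} λ_{i,u} σ² ≤ N_c N_b p₀. -/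
open Matrix BigOperators
open scoped ComplexOrder

/-- Quantization noise term `Q_{i,u} = αβ ∑_j h_{j,i,u}ᴴ diag(∑_v w_{j,v} w_{j,v}ᴴ) h_{j,i,u}`. -/
noncomputable def Qnoise {Nb Nc Nu : ℕ}
    (h : Fin Nc → Fin Nc → Fin Nu → (Fin Nb → ℂ)) (α β : ℝ)
    (w : Fin Nc → Fin Nu → (Fin Nb → ℂ)) (i : Fin Nc) (u : Fin Nu) : ℝ :=
  α * β * (∑ j : Fin Nc, star (h j i u) ⬝ᵥ
    (Matrix.diagonal (Matrix.diag (∑ v : Fin Nu,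
      Matrix.vecMulVec (w j v) (star (w j v))))).mulVec (h j i u)).re

/-- Downlink SINR
`Γ_{i,u}(W) = α²|h_{i,i,u}ᴴ w_{i,u}|² / (α² ∑_{(j,v)≠(i,u)} |h_{j,i,u}ᴴ w_{j,v}|² + Q_{i,u} + σ²)`. -/
noncomputable def Γdl {Nb Nc Nu : ℕ}
    (h : Fin Nc → Fin Nc → Fin Nu → (Fin Nb → ℂ)) (α β σsq : ℝ)
    (w : Fin Nc → Fin Nu → (Fin Nb → ℂ)) (i : Fin Nc) (u : Fin Nu) : ℝ :=
  α ^ 2 * ‖star (h i i u) ⬝ᵥ w i u‖ ^ 2 /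
    (α ^ 2 * ∑ p ∈ Finset.univ.erase (i, u), ‖star (h p.1 i u) ⬝ᵥ w p.1 p.2‖ ^ 2
      + Qnoise h α β w i u + σsq)


lemma quad_vecMulVec {n : Type*} [Fintype n] (a x : n → ℂ) :
    star x ⬝ᵥ (Matrix.vecMulVec a (star a)).mulVec x = ((‖star a ⬝ᵥ x‖ ^ 2 : ℝ) : ℂ) := by
  have h1 : (Matrix.vecMulVec a (star a)).mulVec x = (star a ⬝ᵥ x) • a := by
    ext m
    simp [Matrix.mulVec, Matrix.vecMulVec_apply, dotProduct, Finset.mul_sum, Finset.sum_mul]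
    ring_nf
  have h2 : star x ⬝ᵥ a = (starRingEnd ℂ) (star a ⬝ᵥ x) := by
    simp [dotProduct, map_sum, mul_comm]
  rw [h1, dotProduct_smul, h2, smul_eq_mul, Complex.mul_conj']
  norm_cast

lemma quad_diagonal {n : Type*} [Fintype n] [DecidableEq n] (d x : n → ℂ) :
    star x ⬝ᵥ (Matrix.diagonal d).mulVec x = ∑ m, d m * ((‖x m‖ ^ 2 : ℝ) : ℂ) := by
  simp only [dotProduct, Matrix.mulVec_diagonal, Pi.star_apply]
  refine Finset.sum_congr rfl fun m _ => ?_
  rw [Complex.star_def, show (starRingEnd ℂ) (x m) * (d m * x m) = d m * (x m * (starRingEnd ℂ) (x m)) by ring,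
    Complex.mul_conj']
  norm_cast

lemma my_sum_mulVec {n ι : Type*} [Fintype n] [Fintype ι] (A : ι → Matrix n n ℂ) (x : n → ℂ) :
    (∑ p : ι, A p).mulVec x = ∑ p : ι, (A p).mulVec x := by
  ext i
  simp only [Matrix.mulVec, dotProduct, Matrix.sum_apply, Finset.sum_apply,
    Finset.sum_mul]
  exact Finset.sum_comm

lemma my_dotProduct_sum {n ι : Type*} [Fintype n] [Fintype ι] (x : n → ℂ) (y : ι → n → ℂ) :
    x ⬝ᵥ (∑ p : ι, y p) = ∑ p : ι, x ⬝ᵥ y p := by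
  simp only [dotProduct, Finset.sum_apply, Finset.mul_sum]
  exact Finset.sum_comm

lemma quad_sum_smul {n ι : Type*} [Fintype n] [Fintype ι] (c : ι → ℝ) (a : ι → n → ℂ)
    (x : n → ℂ) :
    star x ⬝ᵥ (∑ p : ι, ((c p : ℝ) : ℂ) • Matrix.vecMulVec (a p) (star (a p))).mulVec x
      = ((∑ p : ι, c p * ‖star (a p) ⬝ᵥ x‖ ^ 2 : ℝ) : ℂ) := by
  rw [my_sum_mulVec, my_dotProduct_sum]
  push_cast
  refine Finset.sum_congr rfl fun p _ => ?_
  rw [Matrix.smul_mulVec, dotProduct_smul, quad_vecMulVec, smul_eq_mul]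
  push_cast
  ring

lemma diag_sum_smul {n ι : Type*} [Fintype n] [Fintype ι] (c : ι → ℝ) (a : ι → n → ℂ)
    (m : n) :
    Matrix.diag (∑ p : ι, ((c p : ℝ) : ℂ) • Matrix.vecMulVec (a p) (star (a p))) m
      = ((∑ p : ι, c p * ‖a p m‖ ^ 2 : ℝ) : ℂ) := by
  simp only [Matrix.diag, Matrix.sum_apply, Matrix.smul_apply, Matrix.vecMulVec_apply,
    Pi.star_apply, Complex.star_def]
  push_cast
  refine Finset.sum_congr rfl fun p _ => ?_
  rw [smul_eq_mul, Complex.mul_conj']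

lemma quad_M {n ι : Type*} [Fintype n] [DecidableEq n] [Fintype ι]
    (α β gval lval : ℝ) (μv : n → ℝ) (a : n → ℂ) (c : ι → ℝ) (b : ι → n → ℂ) (x : n → ℂ) :
    star x ⬝ᵥ ((α : ℂ) • Matrix.diagonal (fun m => (μv m : ℂ))
        - ((α : ℂ) ^ 2 * (1 + 1 / (gval : ℂ)) * (lval : ℂ)) • Matrix.vecMulVec a (star a)
        + ((α : ℂ) ^ 2) • ∑ p : ι, ((c p : ℝ) : ℂ) • Matrix.vecMulVec (b p) (star (b p))
        + ((α * β : ℝ) : ℂ) • Matrix.diagonal (Matrix.diag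
            (∑ p : ι, ((c p : ℝ) : ℂ) • Matrix.vecMulVec (b p) (star (b p))))).mulVec x
      = ((α * (∑ m, μv m * ‖x m‖ ^ 2)
          - α ^ 2 * (1 + 1 / gval) * lval * ‖star a ⬝ᵥ x‖ ^ 2
          + α ^ 2 * ∑ p, c p * ‖star (b p) ⬝ᵥ x‖ ^ 2
          + α * β * ∑ m, (∑ p, c p * ‖b p m‖ ^ 2) * ‖x m‖ ^ 2 : ℝ) : ℂ) := by
  simp only [Matrix.add_mulVec, Matrix.sub_mulVec, Matrix.smul_mulVec,
    dotProduct_add, dotProduct_sub, dotProduct_smul, smul_eq_mul]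
  rw [quad_diagonal, quad_diagonal, quad_vecMulVec, quad_sum_smul]
  simp only [diag_sum_smul c b]
  push_cast
  ring

lemma diag_sum_vmv {n ι : Type*} [Fintype n] [Fintype ι] (a : ι → n → ℂ) (m : n) :
    Matrix.diag (∑ p : ι, Matrix.vecMulVec (a p) (star (a p))) m
      = ((∑ p : ι, ‖a p m‖ ^ 2 : ℝ) : ℂ) := by
  simp only [Matrix.diag, Matrix.sum_apply, Matrix.vecMulVec_apply, Pi.star_apply,
    Complex.star_def]
  push_cast
  refine Finset.sum_congr rfl fun p _ => ?_
  rw [Complex.mul_conj']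

lemma Qnoise_eq {Nb Nc Nu : ℕ}
    (h : Fin Nc → Fin Nc → Fin Nu → (Fin Nb → ℂ)) (α β : ℝ)
    (w : Fin Nc → Fin Nu → (Fin Nb → ℂ)) (i : Fin Nc) (u : Fin Nu) :
    Qnoise h α β w i u
      = α * β * ∑ p : Fin Nc × Fin Nu, ∑ m, ‖w p.1 p.2 m‖ ^ 2 * ‖h p.1 i u m‖ ^ 2 := by
  unfold Qnoise
  congr 1
  have : ∀ j : Fin Nc, star (h j i u) ⬝ᵥ
      (Matrix.diagonal (Matrix.diag (∑ v : Fin Nu,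
        Matrix.vecMulVec (w j v) (star (w j v))))).mulVec (h j i u)
      = ((∑ v : Fin Nu, ∑ m, ‖w j v m‖ ^ 2 * ‖h j i u m‖ ^ 2 : ℝ) : ℂ) := by
    intro j
    rw [quad_diagonal]
    simp only [diag_sum_vmv]
    push_cast
    simp only [Finset.sum_mul]
    exact Finset.sum_comm
  rw [Fintype.sum_prod_type, Complex.re_sum]
  refine Finset.sum_congr rfl fun j _ => ?_
  rw [this j, Complex.ofReal_re]

/-- Weak duality for the per-antenna power minimax problem
(the weak-duality half of Corollary 1). If the primal point `(W, p₀)` satisfies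
all SINR constraints `Γ_{i,u}(W) ≥ γ_{i,u}` and per-antenna constraints
`α[W_i W_iᴴ]_{m,m} ≤ p₀`, and the dual variables `λ_{i,u} ≥ 0`,
`D_i = diag(μ_{i,·}) ⪰ 0` with `tr(D_i) ≤ N_b` make the matrices
`α D_i − α²(1+1/γ_{i,u}) λ_{i,u} h_{i,i,u} h_{i,i,u}ᴴ
+ α² ∑_{j,v} λ_{j,v} h_{i,j,v} h_{i,j,v}ᴴ + αβ·diag(∑_{j,v} λ_{j,v} h_{i,j,v} h_{i,j,v}ᴴ)`
positive semidefinite, then `∑_{i,u} λ_{i,u} σ² ≤ N_c N_b p₀`. -/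
theorem stmt12 {Nb Nc Nu : ℕ}
    (h : Fin Nc → Fin Nc → Fin Nu → (Fin Nb → ℂ))
    (w : Fin Nc → Fin Nu → (Fin Nb → ℂ))
    (β α σsq : ℝ) (hβ : 0 ≤ β ∧ β < 1) (hα : α = 1 - β) (hσ : 0 < σsq)
    (γ : Fin Nc → Fin Nu → ℝ) (hγ : ∀ i u, 0 < γ i u)
    (p₀ : ℝ)
    (hprimalSINR : ∀ i u, Γdl h α β σsq w i u ≥ γ i u)
    (hprimalPA : ∀ (i : Fin Nc) (m : Fin Nb),
      α * ((∑ u : Fin Nu, vecMulVec (w i u) (star (w i u))) m m).re ≤ p₀)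
    (lam : Fin Nc → Fin Nu → ℝ) (μ : Fin Nc → Fin Nb → ℝ)
    (hlam : ∀ i u, 0 ≤ lam i u) (hμ : ∀ i m, 0 ≤ μ i m)
    (htr : ∀ i : Fin Nc, ∑ m : Fin Nb, μ i m ≤ (Nb : ℝ))
    (hPSD : ∀ (i : Fin Nc) (u : Fin Nu),
      ((α : ℂ) • diagonal (fun m => (μ i m : ℂ))
        - ((α : ℂ) ^ 2 * (1 + 1 / (γ i u : ℂ)) * (lam i u : ℂ)) •
            vecMulVec (h i i u) (star (h i i u))
        + ((α : ℂ) ^ 2) • ∑ p : Fin Nc × Fin Nu,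
            (lam p.1 p.2 : ℂ) • vecMulVec (h i p.1 p.2) (star (h i p.1 p.2))
        + ((α * β : ℝ) : ℂ) • diagonal (diag (∑ p : Fin Nc × Fin Nu,
            (lam p.1 p.2 : ℂ) • vecMulVec (h i p.1 p.2) (star (h i p.1 p.2))))).PosSemidef) :
    ∑ i : Fin Nc, ∑ u : Fin Nu, lam i u * σsq ≤ (Nc * Nb : ℕ) * p₀ := by
  obtain ⟨hβ0, hβ1⟩ := hβ
  have hα0 : 0 < α := by rw [hα]; linarith
  -- degenerate cases
  rcases Nat.eq_zero_or_pos Nc with hNc | hNc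
  · subst hNc; simp
  rcases Nat.eq_zero_or_pos Nb with hNb | hNb
  · rcases Nat.eq_zero_or_pos Nu with hNu | hNu
    · subst hNu; simp [hNb]
    · exfalso
      have hg := hprimalSINR ⟨0, hNc⟩ ⟨0, hNu⟩
      have hΓ : Γdl h α β σsq w ⟨0, hNc⟩ ⟨0, hNu⟩ = 0 := by
        subst hNb
        unfold Γdl
        simp [dotProduct]
      rw [hΓ] at hg
      exact absurd (lt_of_lt_of_le (hγ _ _) hg) (lt_irrefl 0)
  -- main case
  have hrePA : ∀ (i : Fin Nc) (m : Fin Nb),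
      ((∑ u : Fin Nu, vecMulVec (w i u) (star (w i u))) m m).re
        = ∑ u : Fin Nu, ‖w i u m‖ ^ 2 := by
    intro i m
    have hd := diag_sum_vmv (fun u => w i u) m
    have : (∑ u : Fin Nu, vecMulVec (w i u) (star (w i u))) m m
        = ((∑ u : Fin Nu, ‖w i u m‖ ^ 2 : ℝ) : ℂ) := hd
    rw [this, Complex.ofReal_re]
  have hPA' : ∀ (i : Fin Nc) (m : Fin Nb), α * ∑ u : Fin Nu, ‖w i u m‖ ^ 2 ≤ p₀ := by
    intro i m
    have := hprimalPA i m
    rwa [hrePA] at this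
  have hp₀ : 0 ≤ p₀ := by
    have := hPA' ⟨0, hNc⟩ ⟨0, hNb⟩
    have h2 : 0 ≤ α * ∑ u : Fin Nu, ‖w ⟨0, hNc⟩ u ⟨0, hNb⟩‖ ^ 2 := by positivity
    linarith
  have hQnn : ∀ i u, 0 ≤ Qnoise h α β w i u := by
    intro i u
    rw [Qnoise_eq]
    have : (0:ℝ) ≤ ∑ p : Fin Nc × Fin Nu, ∑ m, ‖w p.1 p.2 m‖ ^ 2 * ‖h p.1 i u m‖ ^ 2 :=
      Finset.sum_nonneg fun p _ => Finset.sum_nonneg fun m _ => by positivity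
    have h1 : (0:ℝ) ≤ α * β := by positivity
    exact mul_nonneg h1 this
  -- PSD consequence
  have hE : ∀ q : Fin Nc × Fin Nu,
      0 ≤ α * (∑ m, μ q.1 m * ‖w q.1 q.2 m‖ ^ 2)
          - α ^ 2 * (1 + 1 / γ q.1 q.2) * lam q.1 q.2 * ‖star (h q.1 q.1 q.2) ⬝ᵥ w q.1 q.2‖ ^ 2
          + α ^ 2 * ∑ p : Fin Nc × Fin Nu,
              lam p.1 p.2 * ‖star (h q.1 p.1 p.2) ⬝ᵥ w q.1 q.2‖ ^ 2
          + α * β * ∑ m, (∑ p : Fin Nc × Fin Nu, lam p.1 p.2 * ‖h q.1 p.1 p.2 m‖ ^ 2)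
              * ‖w q.1 q.2 m‖ ^ 2 := by
    intro q
    have h0 := (hPSD q.1 q.2).dotProduct_mulVec_nonneg (w q.1 q.2)
    have heq := quad_M α β (γ q.1 q.2) (lam q.1 q.2) (μ q.1) (h q.1 q.1 q.2)
      (fun p : Fin Nc × Fin Nu => lam p.1 p.2) (fun p : Fin Nc × Fin Nu => h q.1 p.1 p.2) (w q.1 q.2)
    beta_reduce at heq
    rw [heq] at h0
    exact Complex.zero_le_real.mp h0
  -- SINR consequence
  have hSINR : ∀ q : Fin Nc × Fin Nu,
      lam q.1 q.2 * (α ^ 2 * (∑ p : Fin Nc × Fin Nu, ‖star (h p.1 q.1 q.2) ⬝ᵥ w p.1 p.2‖ ^ 2)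
          + Qnoise h α β w q.1 q.2 + σsq)
        ≤ α ^ 2 * (1 + 1 / γ q.1 q.2) * lam q.1 q.2 * ‖star (h q.1 q.1 q.2) ⬝ᵥ w q.1 q.2‖ ^ 2 := by
    rintro ⟨i, u⟩
    have hγq := hγ i u
    have hEnn : (0:ℝ) ≤ α ^ 2 * ∑ p ∈ Finset.univ.erase (i, u),
        ‖star (h p.1 i u) ⬝ᵥ w p.1 p.2‖ ^ 2 := by
      have : (0:ℝ) ≤ ∑ p ∈ Finset.univ.erase (i, u),
          ‖star (h p.1 i u) ⬝ᵥ w p.1 p.2‖ ^ 2 :=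
        Finset.sum_nonneg fun p _ => by positivity
      positivity
    have hden : 0 < α ^ 2 * (∑ p ∈ Finset.univ.erase (i, u),
        ‖star (h p.1 i u) ⬝ᵥ w p.1 p.2‖ ^ 2) + Qnoise h α β w i u + σsq := by
      have := hQnn i u
      linarith
    have hg := hprimalSINR i u
    unfold Γdl at hg
    rw [ge_iff_le, le_div_iff₀ hden] at hg
    have hsplit : (∑ p : Fin Nc × Fin Nu, ‖star (h p.1 i u) ⬝ᵥ w p.1 p.2‖ ^ 2)
        = ‖star (h i i u) ⬝ᵥ w i u‖ ^ 2 + ∑ p ∈ Finset.univ.erase (i, u),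
            ‖star (h p.1 i u) ⬝ᵥ w p.1 p.2‖ ^ 2 := by
      exact (Finset.add_sum_erase _ _ (Finset.mem_univ (i, u))).symm
    have hlamq := hlam i u
    have h1 : α ^ 2 * (∑ p ∈ Finset.univ.erase (i, u),
        ‖star (h p.1 i u) ⬝ᵥ w p.1 p.2‖ ^ 2) + Qnoise h α β w i u + σsq
        ≤ α ^ 2 * ‖star (h i i u) ⬝ᵥ w i u‖ ^ 2 / γ i u := by
      rw [le_div_iff₀ hγq]
      linarith
    have h2 : lam i u * (α ^ 2 * (∑ p ∈ Finset.univ.erase (i, u),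
        ‖star (h p.1 i u) ⬝ᵥ w p.1 p.2‖ ^ 2) + Qnoise h α β w i u + σsq)
        ≤ lam i u * (α ^ 2 * ‖star (h i i u) ⬝ᵥ w i u‖ ^ 2 / γ i u) :=
      mul_le_mul_of_nonneg_left h1 hlamq
    have h3 : α ^ 2 * (1 + 1 / γ i u) * lam i u * ‖star (h i i u) ⬝ᵥ w i u‖ ^ 2
        = lam i u * (α ^ 2 * ‖star (h i i u) ⬝ᵥ w i u‖ ^ 2)
          + lam i u * (α ^ 2 * ‖star (h i i u) ⬝ᵥ w i u‖ ^ 2 / γ i u) := by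
      field_simp
    rw [hsplit, h3]
    have h4 : lam i u * (α ^ 2 * (‖star (h i i u) ⬝ᵥ w i u‖ ^ 2
        + ∑ p ∈ Finset.univ.erase (i, u), ‖star (h p.1 i u) ⬝ᵥ w p.1 p.2‖ ^ 2)
        + Qnoise h α β w i u + σsq)
        = lam i u * (α ^ 2 * ‖star (h i i u) ⬝ᵥ w i u‖ ^ 2)
          + lam i u * (α ^ 2 * (∑ p ∈ Finset.univ.erase (i, u),
              ‖star (h p.1 i u) ⬝ᵥ w p.1 p.2‖ ^ 2) + Qnoise h α β w i u + σsq) := by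
      ring
    rw [h4]
    linarith
  -- sum exchange identities
  have hC : ∑ q : Fin Nc × Fin Nu, α ^ 2 * ∑ p : Fin Nc × Fin Nu,
        lam p.1 p.2 * ‖star (h q.1 p.1 p.2) ⬝ᵥ w q.1 q.2‖ ^ 2
      = ∑ q : Fin Nc × Fin Nu, lam q.1 q.2 * (α ^ 2 * ∑ p : Fin Nc × Fin Nu,
        ‖star (h p.1 q.1 q.2) ⬝ᵥ w p.1 p.2‖ ^ 2) := by
    simp only [Finset.mul_sum]
    exact Finset.sum_comm.trans
      (Finset.sum_congr rfl fun q _ => Finset.sum_congr rfl fun p _ => by ring)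
  have hD : ∑ q : Fin Nc × Fin Nu, α * β * ∑ m,
        (∑ p : Fin Nc × Fin Nu, lam p.1 p.2 * ‖h q.1 p.1 p.2 m‖ ^ 2) * ‖w q.1 q.2 m‖ ^ 2
      = ∑ q : Fin Nc × Fin Nu, lam q.1 q.2 * Qnoise h α β w q.1 q.2 := by
    simp only [Qnoise_eq, Finset.mul_sum, Finset.sum_mul]
    have step1 : ∀ q : Fin Nc × Fin Nu,
        (∑ m, ∑ p : Fin Nc × Fin Nu,
          α * β * (lam p.1 p.2 * ‖h q.1 p.1 p.2 m‖ ^ 2 * ‖w q.1 q.2 m‖ ^ 2))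
        = ∑ p : Fin Nc × Fin Nu, ∑ m,
          α * β * (lam p.1 p.2 * ‖h q.1 p.1 p.2 m‖ ^ 2 * ‖w q.1 q.2 m‖ ^ 2) :=
      fun q => Finset.sum_comm
    refine (Finset.sum_congr rfl fun q _ => step1 q).trans ?_
    refine Finset.sum_comm.trans ?_
    refine Finset.sum_congr rfl fun q _ => Finset.sum_congr rfl fun p _ =>
      Finset.sum_congr rfl fun m _ => ?_
    ring
    -- combine everything
  have hsum : 0 ≤ ∑ q : Fin Nc × Fin Nu,
      (α * (∑ m, μ q.1 m * ‖w q.1 q.2 m‖ ^ 2)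
        - α ^ 2 * (1 + 1 / γ q.1 q.2) * lam q.1 q.2 * ‖star (h q.1 q.1 q.2) ⬝ᵥ w q.1 q.2‖ ^ 2
        + α ^ 2 * ∑ p : Fin Nc × Fin Nu,
            lam p.1 p.2 * ‖star (h q.1 p.1 p.2) ⬝ᵥ w q.1 q.2‖ ^ 2
        + α * β * ∑ m, (∑ p : Fin Nc × Fin Nu, lam p.1 p.2 * ‖h q.1 p.1 p.2 m‖ ^ 2)
            * ‖w q.1 q.2 m‖ ^ 2) :=
    Finset.sum_nonneg fun q _ => hE q
  have hsplit : ∑ q : Fin Nc × Fin Nu,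
      (α * (∑ m, μ q.1 m * ‖w q.1 q.2 m‖ ^ 2)
        - α ^ 2 * (1 + 1 / γ q.1 q.2) * lam q.1 q.2 * ‖star (h q.1 q.1 q.2) ⬝ᵥ w q.1 q.2‖ ^ 2
        + α ^ 2 * ∑ p : Fin Nc × Fin Nu,
            lam p.1 p.2 * ‖star (h q.1 p.1 p.2) ⬝ᵥ w q.1 q.2‖ ^ 2
        + α * β * ∑ m, (∑ p : Fin Nc × Fin Nu, lam p.1 p.2 * ‖h q.1 p.1 p.2 m‖ ^ 2)
            * ‖w q.1 q.2 m‖ ^ 2)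
      = (∑ q : Fin Nc × Fin Nu, α * (∑ m, μ q.1 m * ‖w q.1 q.2 m‖ ^ 2))
        - (∑ q : Fin Nc × Fin Nu,
            α ^ 2 * (1 + 1 / γ q.1 q.2) * lam q.1 q.2 * ‖star (h q.1 q.1 q.2) ⬝ᵥ w q.1 q.2‖ ^ 2)
        + (∑ q : Fin Nc × Fin Nu, α ^ 2 * ∑ p : Fin Nc × Fin Nu,
            lam p.1 p.2 * ‖star (h q.1 p.1 p.2) ⬝ᵥ w q.1 q.2‖ ^ 2)
        + (∑ q : Fin Nc × Fin Nu, α * β * ∑ m,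
            (∑ p : Fin Nc × Fin Nu, lam p.1 p.2 * ‖h q.1 p.1 p.2 m‖ ^ 2) * ‖w q.1 q.2 m‖ ^ 2) := by
    simp only [Finset.sum_add_distrib, Finset.sum_sub_distrib]
  have hB : ∑ q : Fin Nc × Fin Nu,
      lam q.1 q.2 * (α ^ 2 * (∑ p : Fin Nc × Fin Nu, ‖star (h p.1 q.1 q.2) ⬝ᵥ w p.1 p.2‖ ^ 2)
          + Qnoise h α β w q.1 q.2 + σsq)
      ≤ ∑ q : Fin Nc × Fin Nu,
          α ^ 2 * (1 + 1 / γ q.1 q.2) * lam q.1 q.2 * ‖star (h q.1 q.1 q.2) ⬝ᵥ w q.1 q.2‖ ^ 2 :=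
    Finset.sum_le_sum fun q _ => hSINR q
  have hBsplit : ∑ q : Fin Nc × Fin Nu,
      lam q.1 q.2 * (α ^ 2 * (∑ p : Fin Nc × Fin Nu, ‖star (h p.1 q.1 q.2) ⬝ᵥ w p.1 p.2‖ ^ 2)
          + Qnoise h α β w q.1 q.2 + σsq)
      = (∑ q : Fin Nc × Fin Nu, lam q.1 q.2
            * (α ^ 2 * ∑ p : Fin Nc × Fin Nu, ‖star (h p.1 q.1 q.2) ⬝ᵥ w p.1 p.2‖ ^ 2))
        + (∑ q : Fin Nc × Fin Nu, lam q.1 q.2 * Qnoise h α β w q.1 q.2)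
        + (∑ q : Fin Nc × Fin Nu, lam q.1 q.2 * σsq) := by
    simp only [mul_add, Finset.sum_add_distrib]
  have key : (∑ q : Fin Nc × Fin Nu, lam q.1 q.2 * σsq)
      ≤ ∑ q : Fin Nc × Fin Nu, α * (∑ m, μ q.1 m * ‖w q.1 q.2 m‖ ^ 2) := by
    rw [hsplit] at hsum
    rw [hBsplit] at hB
    linarith [hC, hD]
  have g1 : (∑ q : Fin Nc × Fin Nu, lam q.1 q.2 * σsq)
      = ∑ i : Fin Nc, ∑ u : Fin Nu, lam i u * σsq := by
    rw [Fintype.sum_prod_type]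
  have g2 : (∑ q : Fin Nc × Fin Nu, α * (∑ m, μ q.1 m * ‖w q.1 q.2 m‖ ^ 2))
      ≤ (Nc * Nb : ℕ) * p₀ := by
    rw [Fintype.sum_prod_type]
    have per : ∀ i : Fin Nc, ∑ u : Fin Nu, α * ∑ m, μ i m * ‖w i u m‖ ^ 2
        = ∑ m, μ i m * (α * ∑ u : Fin Nu, ‖w i u m‖ ^ 2) := by
      intro i
      simp only [Finset.mul_sum]
      exact Finset.sum_comm.trans
        (Finset.sum_congr rfl fun m _ => Finset.sum_congr rfl fun u _ => by ring)
    calc ∑ i : Fin Nc, ∑ u : Fin Nu, α * ∑ m, μ i m * ‖w i u m‖ ^ 2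
        = ∑ i : Fin Nc, ∑ m, μ i m * (α * ∑ u : Fin Nu, ‖w i u m‖ ^ 2) :=
          Finset.sum_congr rfl fun i _ => per i
      _ ≤ ∑ i : Fin Nc, ∑ m : Fin Nb, μ i m * p₀ :=
          Finset.sum_le_sum fun i _ => Finset.sum_le_sum fun m _ =>
            mul_le_mul_of_nonneg_left (hPA' i m) (hμ i m)
      _ ≤ ∑ _i : Fin Nc, (Nb : ℝ) * p₀ :=
          Finset.sum_le_sum fun i _ => by
            rw [← Finset.sum_mul]
            exact mul_le_mul_of_nonneg_right (htr i) hp₀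
      _ = (Nc * Nb : ℕ) * p₀ := by
          rw [Finset.sum_const, Finset.card_univ, Fintype.card_fin, nsmul_eq_mul]
          push_cast
          ring
  calc ∑ i : Fin Nc, ∑ u : Fin Nu, lam i u * σsq
      = ∑ q : Fin Nc × Fin Nu, lam q.1 q.2 * σsq := g1.symm
    _ ≤ ∑ q : Fin Nc × Fin Nu, α * (∑ m, μ q.1 m * ‖w q.1 q.2 m‖ ^ 2) := key
    _ ≤ (Nc * Nb : ℕ) * p₀ := g2
end
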